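/- Let a group Λ act without inversion on a tree T, let v₀ be a vertex, and let Λ_{v₀} be the isotropy (stabilizer) subgroup of v₀. Then the quotient graph T̂ = Λ_{v₀} \ T is again a tree. -/

import Mathlib

/-- The quotient of a graph `T` by a group action: vertices are orbits, and two
distinct orbits are adjacent iff they have adjacent representatives. -/
def orbitQuotientGraph {V : Type*} (T : SimpleGraph V) (S : Type*) [Group S]
    [MulAction S V] : SimpleGraph (Quotient (MulAction.orbitRel S V)) where
  Adj a b := a ≠ b ∧ ∃ v w : V,
    Quotient.mk (MulAction.orbitRel S V) v = a ∧
    Quotient.mk (MulAction.orbitRel S V) w = b ∧ T.Adj v w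
  symm := by
    constructor
    rintro a b ⟨hab, v, w, hv, hw, hadj⟩
    exact ⟨hab.symm, w, v, hw, hv, hadj.symm⟩
  loopless := by
    constructor
    rintro a ⟨hab, -⟩
    exact hab rfl

section TreeAux
open SimpleGraph
variable {V : Type*} {T : SimpleGraph V}

/-- In a tree, every path realizes the distance. -/
lemma tree_path_length_eq_dist (hT : T.IsTree) {u v : V} (p : T.Walk u v)
    (hp : p.IsPath) : p.length = T.dist u v := by
  obtain ⟨q, hq, hql⟩ := hT.isConnected.exists_path_of_dist u v
  obtain ⟨r, hr, hru⟩ := hT.existsUnique_path u v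
  rw [hru p hp, ← hru q hq, hql]

/-- In a tree, distances to a fixed vertex differ by exactly one across an edge. -/
lemma tree_adj_dist (hT : T.IsTree) (v₀ : V) {v w : V} (h : T.Adj v w) :
    T.dist v₀ w + 1 = T.dist v₀ v ∨ T.dist v₀ v + 1 = T.dist v₀ w := by
  classical
  obtain ⟨p, hp, hpl⟩ := hT.isConnected.exists_path_of_dist v₀ v
  by_cases hw : w ∈ p.support
  · left
    have htake := hp.takeUntil hw
    have hdrop := hp.dropUntil hw
    have hedge : (Walk.cons h.symm Walk.nil : T.Walk w v).IsPath := by simp [h.symm.ne]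
    obtain ⟨r, hr, hru⟩ := hT.existsUnique_path w v
    have hd : p.dropUntil w hw = Walk.cons h.symm Walk.nil := by
      rw [hru _ hdrop, hru _ hedge]
    have hlen := congrArg Walk.length (p.take_spec hw)
    rw [Walk.length_append, hd] at hlen
    simp only [Walk.length_cons, Walk.length_nil, zero_add] at hlen
    rw [tree_path_length_eq_dist hT _ htake] at hlen
    rw [← hpl, ← hlen]
  · right
    have hcp : (p.concat h).IsPath := by
      rw [← Walk.isPath_reverse_iff, Walk.reverse_concat]
      rw [Walk.cons_isPath_iff]
      exact ⟨hp.reverse, by simpa [Walk.support_reverse] using hw⟩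
    have := tree_path_length_eq_dist hT _ hcp
    rw [Walk.length_concat, hpl] at this
    exact this

/-- In a tree, the neighbor closer to the root is unique. -/
lemma tree_parent_unique (hT : T.IsTree) (v₀ : V) {v u u' : V}
    (hu : T.Adj v u) (hu' : T.Adj v u')
    (hdu : T.dist v₀ u + 1 = T.dist v₀ v) (hdu' : T.dist v₀ u' + 1 = T.dist v₀ v) :
    u = u' := by
  have key : ∀ {x : V}, T.Adj v x → T.dist v₀ x + 1 = T.dist v₀ v →
      ∃ q : T.Walk v₀ v, q.IsPath ∧ q.length = T.dist v₀ v ∧ q.reverse.getVert 1 = x := by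
    classical
    intro x hx hdx
    obtain ⟨p, hp, hpl⟩ := hT.isConnected.exists_path_of_dist v₀ x
    have hv : v ∉ p.support := by
      intro hv
      have htake := hp.takeUntil hv
      have h1 := tree_path_length_eq_dist hT _ htake
      have h2 := p.length_takeUntil_le hv
      omega
    have hcp : (p.concat hx.symm).IsPath := by
      rw [← Walk.isPath_reverse_iff, Walk.reverse_concat, Walk.cons_isPath_iff]
      exact ⟨hp.reverse, by simpa [Walk.support_reverse] using hv⟩
    refine ⟨p.concat hx.symm, hcp, ?_, ?_⟩
    · rw [Walk.length_concat, hpl, hdx]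
    · rw [Walk.reverse_concat]
      exact Walk.getVert_zero _
  obtain ⟨q, hq, _, hq1⟩ := key hu hdu
  obtain ⟨q', hq', _, hq1'⟩ := key hu' hdu'
  obtain ⟨r, hr, hru⟩ := hT.existsUnique_path v₀ v
  have : q = q' := by rw [hru q hq, hru q' hq']
  rw [← hq1, ← hq1', this]

/-- In a path of length at least 2, the second vertex is not the final one. -/
lemma path_getVert_one_ne_end {u v : V} (p : T.Walk u v) (hp : p.IsPath)
    (hl : 2 ≤ p.length) : p.getVert 1 ≠ v := by
  cases p with
  | nil => simp at hl
  | @cons _ w _ h q =>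
    rw [show (Walk.cons h q).getVert 1 = w from Walk.getVert_zero q]
    rintro rfl
    have hq : q.IsPath := hp.of_cons
    rw [Walk.isPath_iff_eq_nil] at hq
    subst hq
    simp at hl

-- quotient-level lemmas
variable {V Λ : Type*} [Group Λ] [MulAction Λ V]

/-- Distances are invariant under graph automorphisms coming from the action. -/
lemma smul_dist {T : SimpleGraph V} (hT : T.IsTree)
    (hact : ∀ (g : Λ) (v w : V), T.Adj v w → T.Adj (g • v) (g • w))
    (g : Λ) (u v : V) : T.dist (g • u) (g • v) = T.dist u v := by
  have key : ∀ (g : Λ) (u v : V), T.dist (g • u) (g • v) ≤ T.dist u v := by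
    intro g u v
    obtain ⟨p, hpl⟩ := hT.isConnected.exists_walk_length_eq_dist u v
    have hom : T →g T := ⟨fun x => g • x, fun h => hact g _ _ h⟩
    calc T.dist (g • u) (g • v) ≤ (p.map ⟨fun x => g • x, fun h => hact g _ _ h⟩).length :=
          SimpleGraph.dist_le _
      _ = p.length := Walk.length_map _ _
      _ = T.dist u v := hpl
  refine le_antisymm (key g u v) ?_
  have := key g⁻¹ (g • u) (g • v)
  simpa using this

theorem stmt16' {T : SimpleGraph V}
    (hT : T.IsTree)
    (hact : ∀ (g : Λ) (v w : V), T.Adj v w → T.Adj (g • v) (g • w))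
    (v₀ : V) :
    (orbitQuotientGraph T (MulAction.stabilizer Λ v₀)).IsTree := by
  classical
  set S := MulAction.stabilizer Λ v₀ with hSdef
  set Q := orbitQuotientGraph T S with hQdef
  let d : V → ℕ := T.dist v₀
  -- d is constant on S-orbits
  have hs : ∀ (s : S) (v : V), d ((s : Λ) • v) = d v := by
    intro s v
    have h0 : (s : Λ) • v₀ = v₀ := s.2
    calc d ((s : Λ) • v) = T.dist ((s : Λ) • v₀) ((s : Λ) • v) := by rw [h0]
      _ = T.dist v₀ v := smul_dist hT hact _ _ _
  have hconst : ∀ a b : V, MulAction.orbitRel S V a b → d a = d b := by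
    intro a b hab
    obtain ⟨s, rfl⟩ := MulAction.mem_orbit_iff.mp (MulAction.orbitRel_apply.mp hab)
    exact hs s b
  let D : Quotient (MulAction.orbitRel S V) → ℕ := Quotient.lift d hconst
  let qm : V → Quotient (MulAction.orbitRel S V) := Quotient.mk (MulAction.orbitRel S V)
  have hDq : ∀ v : V, D (qm v) = d v := fun _ => rfl
  have hqm : ∀ (s : S) (v : V), qm ((s : Λ) • v) = qm v := by
    intro s v
    exact Quotient.sound (MulAction.orbitRel_apply.mpr (MulAction.mem_orbit _ _))
  -- adjacency in Q changes D by exactly 1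
  have hQB : ∀ {a b}, Q.Adj a b → (D b + 1 = D a ∨ D a + 1 = D b) := by
    rintro a b ⟨hne, v, w, rfl, rfl, hvw⟩
    exact tree_adj_dist hT v₀ hvw
  -- unique parent in Q
  have hQpar : ∀ {x b b'}, Q.Adj x b → Q.Adj x b' → D b + 1 = D x → D b' + 1 = D x →
      b = b' := by
    rintro x b b' ⟨hne, v, w, rfl, rfl, hvw⟩ ⟨hne', v', w', hv', rfl, hvw'⟩ hb hb'
    obtain ⟨s, hsv⟩ := MulAction.mem_orbit_iff.mp (MulAction.orbitRel_apply.mp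
      (Quotient.exact hv'))
    have hsv' : ((s⁻¹ : S) : Λ) • v' = v := by
      rw [← hsv]
      show ((s⁻¹ : S) : Λ) • ((s : Λ) • v) = v
      rw [smul_smul]
      simp
    have hadj2 : T.Adj v (((s⁻¹ : S) : Λ) • w') := by
      have := hact ((s⁻¹ : S) : Λ) v' w' hvw'
      rwa [hsv'] at this
    have hd2 : d (((s⁻¹ : S) : Λ) • w') + 1 = d v := by rw [hs s⁻¹ w']; exact hb'
    have := tree_parent_unique hT v₀ hvw hadj2 hb hd2
    rw [this]
    exact hqm s⁻¹ w'
  constructor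
  · -- connected
    haveI : Nonempty (Quotient (MulAction.orbitRel (↥S) V)) := ⟨qm v₀⟩
    refine ⟨?_⟩
    have step : ∀ {v w : V} (p : T.Walk v w), Q.Reachable (qm v) (qm w) := by
      intro v w p
      induction p with
      | nil => exact SimpleGraph.Reachable.refl _
      | @cons v x w h p ih =>
        by_cases heq : qm v = qm x
        · rwa [heq]
        · exact (SimpleGraph.Adj.reachable
            (show Q.Adj (qm v) (qm x) from ⟨heq, v, x, rfl, rfl, h⟩)).trans ih
    intro a b
    induction a using Quotient.ind
    induction b using Quotient.ind
    obtain ⟨p⟩ := hT.isConnected.preconnected _ _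
    exact step p
  · -- acyclic
    intro a c hc
    obtain ⟨x, hxmem, hmax⟩ := Finset.exists_max_image c.support.toFinset D
      ⟨a, List.mem_toFinset.mpr c.start_mem_support⟩
    have hx : x ∈ c.support := List.mem_toFinset.mp hxmem
    have hmax' : ∀ y ∈ c.support, D y ≤ D x := fun y hy =>
      hmax y (List.mem_toFinset.mpr hy)
    set c' := c.rotate x hx with hc'def
    have hc' : c'.IsCycle := hc.rotate hx
    have hsupp : ∀ y ∈ c'.support, D y ≤ D x := by
      intro y hy
      rw [Walk.support_eq_cons] at hy
      rcases List.mem_cons.mp hy with rfl | hy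
      · exact le_rfl
      · exact hmax' y (List.mem_of_mem_tail
          ((Walk.support_rotate c x hx).mem_iff.mp hy))
    obtain ⟨snd, hadj, q, hceq⟩ := Walk.not_nil_iff.mp hc'.not_nil
    have hqpath : q.IsPath := by
      rw [hceq] at hc'
      exact ((Walk.cons_isCycle_iff _ _).mp hc').1
    have hlen3 : 3 ≤ c'.length := hc'.three_le_length
    have hqlen : 2 ≤ q.length := by
      have : c'.length = q.length + 1 := by rw [hceq]; simp
      omega
    set pen := q.reverse.getVert 1 with hpendef
    have hpenadj : Q.Adj x pen := by
      have h0 : 0 < q.reverse.length := by rw [Walk.length_reverse]; omega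
      have := q.reverse.adj_getVert_succ h0
      rwa [Walk.getVert_zero] at this
    have hpen_ne : pen ≠ snd :=
      path_getVert_one_ne_end q.reverse hqpath.reverse
        (by rw [Walk.length_reverse]; omega)
    have hsnd_mem : snd ∈ c'.support := by
      rw [hceq, Walk.support_cons]
      exact List.mem_cons_of_mem _ q.start_mem_support
    have hpen_mem : pen ∈ c'.support := by
      rw [hceq, Walk.support_cons]
      refine List.mem_cons_of_mem _ ?_
      have : pen ∈ q.reverse.support :=
        Walk.mem_support_iff_exists_getVert.mpr ⟨1, rfl, by rw [Walk.length_reverse]; omega⟩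
      rwa [Walk.support_reverse, List.mem_reverse] at this
    have hxsnd : Q.Adj x snd := hadj
    -- both snd and pen are parents of x
    have hDsnd : D snd + 1 = D x := by
      rcases hQB hxsnd with h | h
      · exact h
      · have := hsupp snd hsnd_mem; omega
    have hDpen : D pen + 1 = D x := by
      rcases hQB hpenadj with h | h
      · exact h
      · have := hsupp pen hpen_mem; omega
    exact hpen_ne (hQpar hpenadj hxsnd hDpen hDsnd)

end TreeAux

/-- If a group `Λ` acts on a tree `T` by graph automorphisms without inversion, and
`Λ_{v₀}` is the stabilizer of a vertex `v₀`, then the quotient graph `Λ_{v₀}\T`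
is again a tree. -/
theorem stmt16 {V Λ : Type*} [Group Λ] [MulAction Λ V] (T : SimpleGraph V)
    (hT : T.IsTree)
    (hact : ∀ (g : Λ) (v w : V), T.Adj v w → T.Adj (g • v) (g • w))
    (hnoinv : ∀ (g : Λ) (v w : V), T.Adj v w → ¬(g • v = w ∧ g • w = v))
    (v₀ : V) :
    (orbitQuotientGraph T (MulAction.stabilizer Λ v₀)).IsTree := by
  exact stmt16' hT hact v₀
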